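/- Fix real matrices A (n×n) and B (n×m), a symmetric positive definite n×n matrix Q, and a symmetric positive definite m×m matrix R, and let P_T be defined by the Riccati iteration P_0 = 0 and P_{k+1} = AᵀP_kA − AᵀP_kB(BᵀP_kB+R)⁻¹BᵀP_kA + Q. Suppose (A,B) is stabilizable, i.e., there exists a real m×n matrix K such that every complex eigenvalue μ of A − BK satisfies |μ| < 1. Then there exists a sequence of real numbers (α_T)_{T≥2} with α_T > 1 for all T, lim_{T→∞} α_T = 1, and P_{T+1} ⪯ α_{T+1} P_T for all T ≥ 1. -/

import Mathlib

open Matrix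

/-- The finite-horizon Riccati iteration with `P 0 = 0` and
`P (k+1) = AᵀP_kA − AᵀP_kB(BᵀP_kB+R)⁻¹BᵀP_kA + Q`. -/
noncomputable def riccati {n m : ℕ} (A : Matrix (Fin n) (Fin n) ℝ)
    (B : Matrix (Fin n) (Fin m) ℝ) (Q : Matrix (Fin n) (Fin n) ℝ)
    (R : Matrix (Fin m) (Fin m) ℝ) : ℕ → Matrix (Fin n) (Fin n) ℝ
  | 0 => 0
  | k + 1 =>
      Aᵀ * riccati A B Q R k * A -
        Aᵀ * riccati A B Q R k * B * (Bᵀ * riccati A B Q R k * B + R)⁻¹ *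
          Bᵀ * riccati A B Q R k * A + Q

/-- The Loewner order on real square matrices: `X ⪯ Y` iff `Y − X` is positive semidefinite. -/
def loewnerLE {n : ℕ} (X Y : Matrix (Fin n) (Fin n) ℝ) : Prop := (Y - X).PosSemidef

namespace RicAux

open Filter

lemma loewner_trans {n : ℕ} {X Y Z : Matrix (Fin n) (Fin n) ℝ}
    (h1 : loewnerLE X Y) (h2 : loewnerLE Y Z) : loewnerLE X Z := by
  have := Matrix.PosSemidef.add h2 h1
  rwa [sub_add_sub_cancel] at this

lemma loewner_refl {n : ℕ} (X : Matrix (Fin n) (Fin n) ℝ) : loewnerLE X X := by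
  simp [loewnerLE, Matrix.PosSemidef.zero]

lemma star_triv {n : ℕ} (x : Fin n → ℝ) : star x = x := by
  funext i; simp

lemma loewner_dot {n : ℕ} {X Y : Matrix (Fin n) (Fin n) ℝ} (h : loewnerLE X Y)
    (x : Fin n → ℝ) : x ⬝ᵥ X *ᵥ x ≤ x ⬝ᵥ Y *ᵥ x := by
  have := h.dotProduct_mulVec_nonneg x
  rw [star_triv, Matrix.sub_mulVec, dotProduct_sub] at this
  linarith

section Core

variable {n m : ℕ} (A : Matrix (Fin n) (Fin n) ℝ) (B : Matrix (Fin n) (Fin m) ℝ)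
    (Q : Matrix (Fin n) (Fin n) ℝ) {R : Matrix (Fin m) (Fin m) ℝ}

/-- The one-step Riccati map. -/
noncomputable def ricMap (R : Matrix (Fin m) (Fin m) ℝ)
    (P : Matrix (Fin n) (Fin n) ℝ) : Matrix (Fin n) (Fin n) ℝ :=
  Aᵀ * P * A - Aᵀ * P * B * (Bᵀ * P * B + R)⁻¹ * Bᵀ * P * A + Q

lemma ric_succ (R : Matrix (Fin m) (Fin m) ℝ) (k : ℕ) :
    riccati A B Q R (k + 1) = ricMap A B Q R (riccati A B Q R k) := rfl

theorem cs_abstract (P : Matrix (Fin n) (Fin n) ℝ) (hP : Pᵀ = P)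
    (K : Matrix (Fin m) (Fin n) ℝ) (M N : Matrix (Fin m) (Fin m) ℝ)
    (h1 : M * N = 1) (h2 : N * M = 1) (h3 : Nᵀ = N)
    (hsplit : M = Bᵀ * P * B + R) :
    (A - B*K)ᵀ * P * (A - B*K) + Kᵀ * R * K + Q =
      (Aᵀ * P * A - Aᵀ * P * B * N * (Bᵀ * P * A) + Q) +
        (K - N * (Bᵀ*P*A))ᵀ * M * (K - N * (Bᵀ*P*A)) := by
  have eMN : ∀ X : Matrix (Fin m) (Fin n) ℝ, Kᵀ * M * (N * X) = Kᵀ * X := fun X => by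
    rw [← Matrix.mul_assoc, Matrix.mul_assoc Kᵀ M N, h1, Matrix.mul_one]
  have eNM : Aᵀ * (P * B) * N * M = Aᵀ * (P * B) := by
    rw [Matrix.mul_assoc _ N M, h2, Matrix.mul_one]
  have hKMK : Kᵀ * M * K = Kᵀ * (Bᵀ * P * B) * K + Kᵀ * R * K := by
    rw [hsplit, Matrix.mul_add, Matrix.add_mul]
  simp only [transpose_sub, transpose_mul, transpose_transpose, hP, h3,
    Matrix.sub_mul, Matrix.mul_sub]
  rw [eMN, eNM, hKMK]
  simp only [Matrix.mul_assoc]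
  abel

variable (hR : R.PosDef)
include hR

lemma Mpd {P : Matrix (Fin n) (Fin n) ℝ} (hP : P.PosSemidef) :
    (Bᵀ * P * B + R).PosDef :=
  Matrix.PosDef.posSemidef_add (hP.conjTranspose_mul_mul_same B) hR

/-- Completing the square: for any `K`,
`(A-BK)ᵀP(A-BK) + KᵀRK + Q = ricMap P + (K-K*)ᵀM(K-K*)`. -/
lemma cs (P : Matrix (Fin n) (Fin n) ℝ) (hP : P.PosSemidef)
    (K : Matrix (Fin m) (Fin n) ℝ) :
    (A - B*K)ᵀ * P * (A - B*K) + Kᵀ * R * K + Q =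
      ricMap A B Q R P +
        (K - (Bᵀ*P*B+R)⁻¹ * (Bᵀ*P*A))ᵀ * (Bᵀ*P*B+R) *
          (K - (Bᵀ*P*B+R)⁻¹ * (Bᵀ*P*A)) := by
  have hMpd := Mpd B hR hP
  have hdet : IsUnit (Bᵀ * P * B + R).det := (Matrix.isUnit_iff_isUnit_det _).mp hMpd.isUnit
  have h1 : (Bᵀ * P * B + R) * (Bᵀ * P * B + R)⁻¹ = 1 := Matrix.mul_nonsing_inv _ hdet
  have h2 : (Bᵀ * P * B + R)⁻¹ * (Bᵀ * P * B + R) = 1 := Matrix.nonsing_inv_mul _ hdet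
  have h3 : ((Bᵀ * P * B + R)⁻¹)ᵀ = (Bᵀ * P * B + R)⁻¹ := by
    rw [Matrix.transpose_nonsing_inv,
      (show (Bᵀ * P * B + R)ᵀ = Bᵀ * P * B + R from hMpd.isHermitian)]
  have := cs_abstract A B Q P hP.isHermitian K (Bᵀ * P * B + R) (Bᵀ * P * B + R)⁻¹
    h1 h2 h3 rfl
  rw [this, ricMap]
  simp only [Matrix.mul_assoc]

lemma ricMap_eq_opt (P : Matrix (Fin n) (Fin n) ℝ) (hP : P.PosSemidef) :
    ricMap A B Q R P =
      (A - B*((Bᵀ*P*B+R)⁻¹ * (Bᵀ*P*A)))ᵀ * P * (A - B*((Bᵀ*P*B+R)⁻¹ * (Bᵀ*P*A))) +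
        ((Bᵀ*P*B+R)⁻¹ * (Bᵀ*P*A))ᵀ * R * ((Bᵀ*P*B+R)⁻¹ * (Bᵀ*P*A)) + Q := by
  have h := cs A B Q hR P hP ((Bᵀ*P*B+R)⁻¹ * (Bᵀ*P*A))
  rw [sub_self] at h
  simp only [Matrix.zero_mul, Matrix.mul_zero, transpose_zero, add_zero] at h
  exact h.symm

lemma ricMap_le (P : Matrix (Fin n) (Fin n) ℝ) (hP : P.PosSemidef)
    (K : Matrix (Fin m) (Fin n) ℝ) :
    loewnerLE (ricMap A B Q R P) ((A - B*K)ᵀ * P * (A - B*K) + Kᵀ * R * K + Q) := by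
  have h := cs A B Q hR P hP K
  rw [loewnerLE, h, add_sub_cancel_left]
  exact ((Mpd B hR hP).posSemidef).conjTranspose_mul_mul_same _

variable (hQ : Q.PosSemidef)
include hQ

lemma ricMap_psd (P : Matrix (Fin n) (Fin n) ℝ) (hP : P.PosSemidef) :
    (ricMap A B Q R P).PosSemidef := by
  rw [ricMap_eq_opt A B Q hR P hP]
  exact ((hP.conjTranspose_mul_mul_same _).add
    (hR.posSemidef.conjTranspose_mul_mul_same _)).add hQ

lemma ricMap_mono {P P' : Matrix (Fin n) (Fin n) ℝ} (hP : P.PosSemidef)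
    (hP' : P'.PosSemidef) (hle : loewnerLE P P') :
    loewnerLE (ricMap A B Q R P) (ricMap A B Q R P') := by
  set K := (Bᵀ*P'*B+R)⁻¹ * (Bᵀ*P'*A) with hK
  refine loewner_trans (ricMap_le A B Q hR P hP K) ?_
  rw [ricMap_eq_opt A B Q hR P' hP', loewnerLE]
  have heq : (A - B*K)ᵀ * P' * (A - B*K) + Kᵀ * R * K + Q -
      ((A - B*K)ᵀ * P * (A - B*K) + Kᵀ * R * K + Q) =
      (A - B*K)ᵀ * (P' - P) * (A - B*K) := by
    simp only [Matrix.mul_sub, Matrix.sub_mul]; abel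
  rw [heq]
  exact hle.conjTranspose_mul_mul_same _

lemma ric_psd : ∀ k, (riccati A B Q R k).PosSemidef
  | 0 => Matrix.PosSemidef.zero
  | (k+1) => by
      rw [ric_succ]
      exact ricMap_psd A B Q hR hQ _ (ric_psd k)

omit hR hQ in
lemma ric_one : riccati A B Q R 1 = Q := by
  show ricMap A B Q R (0 : Matrix (Fin n) (Fin n) ℝ) = Q
  simp [ricMap]

lemma ric_mono (k : ℕ) : loewnerLE (riccati A B Q R k) (riccati A B Q R (k+1)) := by
  induction k with
  | zero =>
      have h0 : riccati A B Q R 0 = 0 := rfl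
      rw [ric_one, h0, loewnerLE, sub_zero]; exact hQ
  | succ k ih =>
      rw [ric_succ, ric_succ]
      exact ricMap_mono A B Q hR hQ (ric_psd A B Q hR hQ k) (ric_psd A B Q hR hQ (k+1)) ih

lemma ric_le_of_le {k l : ℕ} (h : k ≤ l) :
    loewnerLE (riccati A B Q R k) (riccati A B Q R l) := by
  induction l with
  | zero =>
      have : k = 0 := Nat.le_zero.mp h
      subst this; exact loewner_refl _
  | succ l ih =>
      rcases Nat.lt_or_ge k (l+1) with h'|h'
      · exact loewner_trans (ih (Nat.lt_succ_iff.mp h')) (ric_mono A B Q hR hQ l)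
      · have : k = l + 1 := le_antisymm h h'
        subst this; exact loewner_refl _

lemma Q_le_ric {T : ℕ} (hT : 1 ≤ T) : loewnerLE Q (riccati A B Q R T) := by
  have := ric_le_of_le A B Q hR hQ hT
  rwa [ric_one] at this

lemma ric_le_sum (K0 : Matrix (Fin m) (Fin n) ℝ) (T : ℕ) :
    loewnerLE (riccati A B Q R T)
      (∑ k ∈ Finset.range T,
        ((A - B*K0)ᵀ)^k * (Q + K0ᵀ*R*K0) * (A - B*K0)^k) := by
  induction T with
  | zero => simpa [Finset.range_zero, show riccati A B Q R 0 = 0 from rfl] using loewner_refl (0 : Matrix (Fin n) (Fin n) ℝ)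
  | succ T ih =>
      set Φ := A - B*K0 with hΦ
      set S := Q + K0ᵀ*R*K0 with hS
      set Sig := ∑ k ∈ Finset.range T, (Φᵀ)^k * S * Φ^k with hSig
      have step1 : loewnerLE (riccati A B Q R (T+1))
          (Φᵀ * (riccati A B Q R T) * Φ + K0ᵀ * R * K0 + Q) := by
        rw [ric_succ]
        exact ricMap_le A B Q hR _ (ric_psd A B Q hR hQ T) K0
      have step2 : loewnerLE (Φᵀ * (riccati A B Q R T) * Φ + K0ᵀ * R * K0 + Q)
          (Φᵀ * Sig * Φ + K0ᵀ * R * K0 + Q) := by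
        rw [loewnerLE]
        have heq : Φᵀ * Sig * Φ + K0ᵀ * R * K0 + Q -
            (Φᵀ * (riccati A B Q R T) * Φ + K0ᵀ * R * K0 + Q) =
            Φᵀ * (Sig - riccati A B Q R T) * Φ := by
          simp only [Matrix.mul_sub, Matrix.sub_mul]; abel
        rw [heq]
        exact (ih).conjTranspose_mul_mul_same _
      have step3 : Φᵀ * Sig * Φ + K0ᵀ * R * K0 + Q =
          ∑ k ∈ Finset.range (T+1), (Φᵀ)^k * S * Φ^k := by
        rw [Finset.sum_range_succ']
        have hf0 : (Φᵀ)^0 * S * Φ^0 = S := by simp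
        have hfk : ∀ k, (Φᵀ)^(k+1) * S * Φ^(k+1) = Φᵀ * ((Φᵀ)^k * S * Φ^k) * Φ := by
          intro k
          rw [pow_succ', pow_succ]
          simp only [Matrix.mul_assoc]
        simp only [hfk, hf0]
        rw [← Finset.sum_mul, ← Finset.mul_sum, ← hSig, hS]
        abel
      rw [← step3]
      exact loewner_trans step1 step2

end Core

lemma dot_conj {n : ℕ} (S N : Matrix (Fin n) (Fin n) ℝ) (x : Fin n → ℝ) :
    x ⬝ᵥ (Nᵀ * S * N) *ᵥ x = (N *ᵥ x) ⬝ᵥ S *ᵥ (N *ᵥ x) := by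
  rw [← Matrix.mulVec_mulVec, ← Matrix.mulVec_mulVec, Matrix.dotProduct_mulVec,
    Matrix.vecMul_transpose, Matrix.dotProduct_mulVec]

lemma dot_le_norm {n : ℕ} (M : Matrix (Fin n) (Fin n) ℝ) (x : Fin n → ℝ) :
    x ⬝ᵥ M *ᵥ x ≤ (∑ i, ∑ j, |M i j|) * ‖x‖^2 := by
  rw [Finset.sum_mul]
  unfold dotProduct Matrix.mulVec dotProduct
  refine Finset.sum_le_sum fun i _ => ?_
  rw [Finset.mul_sum, Finset.sum_mul]
  refine Finset.sum_le_sum fun j _ => ?_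
  have hxi : |x i| ≤ ‖x‖ := by simpa using norm_le_pi_norm x i
  have hxj : |x j| ≤ ‖x‖ := by simpa using norm_le_pi_norm x j
  have h := le_abs_self (x i * (M i j * x j))
  refine h.trans ?_
  rw [abs_mul, abs_mul]
  calc |x i| * (|M i j| * |x j|) = |M i j| * (|x i| * |x j|) := by ring
    _ ≤ |M i j| * (‖x‖ * ‖x‖) := by
        refine mul_le_mul_of_nonneg_left ?_ (abs_nonneg _)
        exact mul_le_mul hxi hxj (abs_nonneg _) (norm_nonneg _)
    _ = |M i j| * ‖x‖^2 := by ring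

lemma dot_sum {n : ℕ} {ι : Type*} (s : Finset ι) (M : ι → Matrix (Fin n) (Fin n) ℝ)
    (x : Fin n → ℝ) :
    x ⬝ᵥ (∑ k ∈ s, M k) *ᵥ x = ∑ k ∈ s, x ⬝ᵥ (M k) *ᵥ x := by
  classical
  induction s using Finset.induction_on with
  | empty => simp [dotProduct]
  | insert _ _ hk ih =>
      rw [Finset.sum_insert hk, Finset.sum_insert hk, Matrix.add_mulVec,
        dotProduct_add, ih]

lemma posdef_lower {n : ℕ} {Q : Matrix (Fin n) (Fin n) ℝ} (hQ : Q.PosDef) :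
    ∃ c : ℝ, 0 < c ∧ ∀ x : Fin n → ℝ, c * ‖x‖^2 ≤ x ⬝ᵥ Q *ᵥ x := by
  rcases Nat.eq_zero_or_pos n with h0 | hn
  · subst h0
    refine ⟨1, one_pos, fun x => ?_⟩
    have h1 : x ⬝ᵥ Q *ᵥ x = 0 := by simp [dotProduct]
    have h2 : ‖x‖ = 0 := by
      have : x = 0 := funext fun i => absurd i.2 (by omega)
      simp [this]
    rw [h1, h2]; norm_num
  haveI : Nonempty (Fin n) := ⟨⟨0, hn⟩⟩
  have hf : Continuous (fun x : Fin n → ℝ => x ⬝ᵥ Q *ᵥ x) := by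
    unfold dotProduct Matrix.mulVec dotProduct
    exact continuous_finset_sum _ fun i _ => (continuous_apply i).mul
      (continuous_finset_sum _ fun j _ => continuous_const.mul (continuous_apply j))
  have hS : IsCompact (Metric.sphere (0 : Fin n → ℝ) 1) := isCompact_sphere _ _
  have hSne : (Metric.sphere (0 : Fin n → ℝ) 1).Nonempty := by
    refine ⟨fun _ => 1, ?_⟩
    simp [Metric.mem_sphere, dist_zero_right, pi_norm_const]
  obtain ⟨x0, hx0S, hmin⟩ := hS.exists_isMinOn hSne hf.continuousOn
  have hx0norm : ‖x0‖ = 1 := by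
    simpa [Metric.mem_sphere, dist_zero_right] using hx0S
  have hx0ne : x0 ≠ 0 := fun h => by simp [h] at hx0norm
  have hc : 0 < x0 ⬝ᵥ Q *ᵥ x0 := by
    have := hQ.dotProduct_mulVec_pos hx0ne
    rwa [star_triv] at this
  refine ⟨x0 ⬝ᵥ Q *ᵥ x0, hc, fun x => ?_⟩
  rcases eq_or_ne x 0 with rfl | hx
  · simp [dotProduct]
  · have hxn : 0 < ‖x‖ := norm_pos_iff.mpr hx
    set y := ‖x‖⁻¹ • x with hy
    have hyS : y ∈ Metric.sphere (0 : Fin n → ℝ) 1 := by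
      simp only [Metric.mem_sphere, dist_zero_right, hy, norm_smul, norm_inv, norm_norm]
      field_simp
    have hmin' : x0 ⬝ᵥ Q *ᵥ x0 ≤ y ⬝ᵥ Q *ᵥ y := isMinOn_iff.mp hmin y hyS
    have hscale : y ⬝ᵥ Q *ᵥ y = (‖x‖⁻¹)^2 * (x ⬝ᵥ Q *ᵥ x) := by
      rw [hy, Matrix.mulVec_smul, smul_dotProduct, dotProduct_smul]
      simp [smul_eq_mul]; ring
    rw [hscale] at hmin'
    have key : (‖x‖⁻¹)^2 * ‖x‖^2 = 1 := by field_simp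
    calc (x0 ⬝ᵥ Q *ᵥ x0) * ‖x‖^2
        ≤ ((‖x‖⁻¹)^2 * (x ⬝ᵥ Q *ᵥ x)) * ‖x‖^2 :=
          mul_le_mul_of_nonneg_right hmin' (sq_nonneg _)
      _ = (x ⬝ᵥ Q *ᵥ x) * ((‖x‖⁻¹)^2 * ‖x‖^2) := by ring
      _ = x ⬝ᵥ Q *ᵥ x := by rw [key, mul_one]

section Spec

attribute [local instance] Matrix.linftyOpNormedAddCommGroup Matrix.linftyOpNormedRing
  Matrix.linftyOpNormedAlgebra

variable {n : ℕ}

lemma nnnorm_map_complex (M : Matrix (Fin n) (Fin n) ℝ) :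
    ‖M.map (fun r : ℝ => (r : ℂ))‖₊ = ‖M‖₊ := by
  simp only [Matrix.linfty_opNNNorm_def]
  congr 1
  funext i
  congr 1
  funext j
  simp [Matrix.map_apply]

lemma norm_map_complex (M : Matrix (Fin n) (Fin n) ℝ) :
    ‖M.map (fun r : ℝ => (r : ℂ))‖ = ‖M‖ :=
  congrArg NNReal.toReal (nnnorm_map_complex M)

lemma pow_norm_geom (hn : 0 < n) (Φ : Matrix (Fin n) (Fin n) ℝ)
    (h : ∀ μ ∈ spectrum ℂ (Φ.map (fun r : ℝ => (r : ℂ))), ‖μ‖ < 1) :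
    ∃ C : ℝ, 0 ≤ C ∧ ∃ r : ℝ, 0 ≤ r ∧ r < 1 ∧
      ∀ k : ℕ, ‖Φ^k‖ ≤ C * r^k := by
  haveI : Nonempty (Fin n) := ⟨⟨0, hn⟩⟩
  haveI : Nontrivial (Matrix (Fin n) (Fin n) ℂ) := by infer_instance
  set Mc : Matrix (Fin n) (Fin n) ℂ := Φ.map (fun r : ℝ => (r : ℂ)) with hMc
  have hrad : spectralRadius ℂ Mc < 1 := by
    have := spectrum.spectralRadius_lt_of_forall_lt Mc (r := 1) ?_
    · simpa using this
    · intro z hz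
      have := h z hz
      simpa [← NNReal.coe_lt_coe, nnnorm] using this
  obtain ⟨ρ', hρ1, hρ2⟩ := exists_between hrad
  have hρ'top : ρ' ≠ ⊤ := by
    intro hh; rw [hh] at hρ2; exact (by simp at hρ2)
  have hgel := spectrum.pow_nnnorm_pow_one_div_tendsto_nhds_spectralRadius Mc
  have hev : ∀ᶠ k : ℕ in Filter.atTop, (‖Mc ^ k‖₊ : ENNReal) ^ (1 / (k:ℝ)) < ρ' :=
    hgel.eventually_lt_const hρ1
  set r : ℝ := max ρ'.toReal (1/2) with hr
  have hrpos : 0 < r := lt_of_lt_of_le (by norm_num) (le_max_right _ _)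
  have hr0 : 0 ≤ r := hrpos.le
  have hr1 : r < 1 := by
    have : ρ'.toReal < 1 := by
      have := (ENNReal.toReal_lt_toReal hρ'top (by simp : (1:ENNReal) ≠ ⊤)).mpr hρ2
      simpa using this
    exact max_lt this (by norm_num)
  have hev2 : ∀ᶠ k : ℕ in Filter.atTop, ‖Φ^k‖ ≤ r^k := by
    filter_upwards [hev, Filter.eventually_gt_atTop 0] with k hk hkpos
    have hkR : (0:ℝ) < (k:ℝ) := by exact_mod_cast hkpos
    have h1 : (‖Mc ^ k‖₊ : ENNReal) ≤ ρ' ^ (k:ℕ) := by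
      have hx := ENNReal.rpow_le_rpow hk.le (Nat.cast_nonneg k)
      rw [← ENNReal.rpow_mul, one_div, inv_mul_cancel₀ (ne_of_gt hkR),
        ENNReal.rpow_one, ENNReal.rpow_natCast] at hx
      exact hx
    have h2 : ‖Mc ^ k‖ ≤ ρ'.toReal ^ k := by
      have hfin : ρ' ^ k ≠ ⊤ := ENNReal.pow_ne_top hρ'top
      have := (ENNReal.toReal_le_toReal (by simp) hfin).mpr h1
      simpa [ENNReal.toReal_pow] using this
    have h3 : ‖Φ^k‖ = ‖Mc^k‖ := by
      rw [← norm_map_complex (Φ^k)]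
      congr 1
      exact map_pow (Complex.ofRealHom.mapMatrix) Φ k
    rw [h3]
    exact h2.trans (pow_le_pow_left₀ ENNReal.toReal_nonneg (le_max_left _ _) k)
  obtain ⟨N, hN⟩ := Filter.eventually_atTop.mp hev2
  have hsum : 0 ≤ ∑ k ∈ Finset.range N, ‖Φ^k‖ / r^k :=
    Finset.sum_nonneg fun k _ => div_nonneg (norm_nonneg _) (pow_nonneg hr0 _)
  refine ⟨1 + ∑ k ∈ Finset.range N, ‖Φ^k‖ / r^k, by linarith, r, hr0, hr1, fun k => ?_⟩
  rcases Nat.lt_or_ge k N with hkN | hkN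
  · have hterm : ‖Φ^k‖ / r^k ≤ ∑ k ∈ Finset.range N, ‖Φ^k‖ / r^k :=
      Finset.single_le_sum (f := fun k => ‖Φ^k‖ / r^k)
        (fun i _ => div_nonneg (norm_nonneg _) (pow_nonneg hr0 _))
        (Finset.mem_range.mpr hkN)
    have hrk : (0:ℝ) < r^k := pow_pos hrpos k
    have h4 : ‖Φ^k‖ / r^k ≤ 1 + ∑ k ∈ Finset.range N, ‖Φ^k‖ / r^k := by linarith
    have := (div_le_iff₀ hrk).mp h4
    linarith
  · have h5 := hN k hkN
    have hrk : (0:ℝ) ≤ r^k := pow_nonneg hr0 k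
    nlinarith

/-- Uniform boundedness of the Riccati quadratic forms under stabilizability. -/
lemma ric_bound {m : ℕ} (hn : 0 < n) (A : Matrix (Fin n) (Fin n) ℝ)
    (B : Matrix (Fin n) (Fin m) ℝ) (Q : Matrix (Fin n) (Fin n) ℝ)
    {R : Matrix (Fin m) (Fin m) ℝ} (hR : R.PosDef) (hQ : Q.PosSemidef)
    (K0 : Matrix (Fin m) (Fin n) ℝ)
    (hK0 : ∀ μ ∈ spectrum ℂ ((A - B * K0).map (fun r : ℝ => (r : ℂ))), ‖μ‖ < 1) :
    ∃ b : ℝ, ∀ T : ℕ, ∀ x : Fin n → ℝ,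
      x ⬝ᵥ (riccati A B Q R T) *ᵥ x ≤ b * ‖x‖^2 := by
  obtain ⟨C, hC0, r, hr0, hr1, hCr⟩ := pow_norm_geom hn (A - B*K0) hK0
  set Φ := A - B*K0 with hΦ
  set S := Q + K0ᵀ*R*K0 with hS
  set cS : ℝ := ∑ i, ∑ j, |S i j| with hcS
  have hcS0 : 0 ≤ cS :=
    Finset.sum_nonneg fun i _ => Finset.sum_nonneg fun j _ => abs_nonneg _
  have hr20 : 0 ≤ r^2 := sq_nonneg r
  have hr21 : r^2 < 1 := by nlinarith
  refine ⟨cS * C^2 * (1 - r^2)⁻¹, fun T x => ?_⟩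
  have h1 := loewner_dot (ric_le_sum A B Q hR hQ K0 T) x
  rw [dot_sum] at h1
  have h2 : ∀ k, x ⬝ᵥ ((Φᵀ)^k * S * Φ^k) *ᵥ x ≤ cS * C^2 * (r^2)^k * ‖x‖^2 := by
    intro k
    have e1 : (Φᵀ)^k * S * Φ^k = (Φ^k)ᵀ * S * (Φ^k) := by rw [Matrix.transpose_pow]
    rw [e1, dot_conj]
    refine (dot_le_norm S (Φ^k *ᵥ x)).trans ?_
    have hnv : ‖Φ^k *ᵥ x‖ ≤ C * r^k * ‖x‖ := by
      refine (Matrix.linfty_opNorm_mulVec _ _).trans ?_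
      exact mul_le_mul_of_nonneg_right (hCr k) (norm_nonneg x)
    have hsq : ‖Φ^k *ᵥ x‖^2 ≤ (C * r^k * ‖x‖)^2 :=
      pow_le_pow_left₀ (norm_nonneg _) hnv 2
    calc cS * ‖Φ^k *ᵥ x‖^2 ≤ cS * (C * r^k * ‖x‖)^2 :=
          mul_le_mul_of_nonneg_left hsq hcS0
      _ = cS * C^2 * (r^2)^k * ‖x‖^2 := by ring
  have h3 : ∑ k ∈ Finset.range T, x ⬝ᵥ ((Φᵀ)^k * S * Φ^k) *ᵥ x ≤
      ∑ k ∈ Finset.range T, cS * C^2 * (r^2)^k * ‖x‖^2 :=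
    Finset.sum_le_sum fun k _ => h2 k
  have h4 : ∑ k ∈ Finset.range T, cS * C^2 * (r^2)^k * ‖x‖^2 =
      (cS * C^2 * ‖x‖^2) * ∑ k ∈ Finset.range T, (r^2)^k := by
    rw [Finset.mul_sum]; congr 1; funext k; ring
  have h5 : ∑ k ∈ Finset.range T, (r^2)^k ≤ (1 - r^2)⁻¹ := by
    have hsummable := summable_geometric_of_lt_one hr20 hr21
    have := hsummable.sum_le_tsum (Finset.range T) (fun k _ => pow_nonneg hr20 k)
    rwa [tsum_geometric_of_lt_one hr20 hr21] at this
  have h6 : (cS * C^2 * ‖x‖^2) * ∑ k ∈ Finset.range T, (r^2)^k ≤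
      (cS * C^2 * ‖x‖^2) * (1 - r^2)⁻¹ := by
    refine mul_le_mul_of_nonneg_left h5 ?_
    positivity
  calc x ⬝ᵥ (riccati A B Q R T) *ᵥ x
      ≤ ∑ k ∈ Finset.range T, x ⬝ᵥ ((Φᵀ)^k * S * Φ^k) *ᵥ x := h1
    _ ≤ ∑ k ∈ Finset.range T, cS * C^2 * (r^2)^k * ‖x‖^2 := h3
    _ = (cS * C^2 * ‖x‖^2) * ∑ k ∈ Finset.range T, (r^2)^k := h4
    _ ≤ (cS * C^2 * ‖x‖^2) * (1 - r^2)⁻¹ := h6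
    _ = cS * C^2 * (1 - r^2)⁻¹ * ‖x‖^2 := by ring

end Spec

lemma entry_of_quadratic {n : ℕ} (M : Matrix (Fin n) (Fin n) ℝ) (hM : Mᵀ = M)
    (i j : Fin n) :
    M i j = ((Pi.single i 1 + Pi.single j 1) ⬝ᵥ M *ᵥ (Pi.single i 1 + Pi.single j 1)
      - Pi.single i 1 ⬝ᵥ M *ᵥ Pi.single i 1 - Pi.single j 1 ⬝ᵥ M *ᵥ Pi.single j 1) / 2 := by
  have hji : M j i = M i j := by
    have := congrFun (congrFun hM i) j
    simpa using this
  simp only [Matrix.mulVec_add, dotProduct_add, add_dotProduct,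
    Matrix.mulVec_single, single_dotProduct]
  simp [hji]
  ring

/-- The entrywise difference `δ T = ∑ |(P_{T+1} - P_T) i j|` tends to zero. -/
lemma delta_tendsto {n m : ℕ} (hn : 0 < n) (A : Matrix (Fin n) (Fin n) ℝ)
    (B : Matrix (Fin n) (Fin m) ℝ) {Q : Matrix (Fin n) (Fin n) ℝ}
    {R : Matrix (Fin m) (Fin m) ℝ} (hR : R.PosDef) (hQ : Q.PosSemidef)
    (K0 : Matrix (Fin m) (Fin n) ℝ)
    (hK0 : ∀ μ ∈ spectrum ℂ ((A - B * K0).map (fun r : ℝ => (r : ℂ))), ‖μ‖ < 1) :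
    Filter.Tendsto (fun T => ∑ i, ∑ j,
      |(riccati A B Q R (T+1) - riccati A B Q R T) i j|) Filter.atTop (nhds 0) := by
  obtain ⟨b, hb⟩ := ric_bound hn A B Q hR hQ K0 hK0
  set q : (Fin n → ℝ) → ℕ → ℝ := fun x T => x ⬝ᵥ (riccati A B Q R T) *ᵥ x with hq
  have hmono : ∀ x, Monotone (q x) := fun x =>
    monotone_nat_of_le_succ fun T => loewner_dot (ric_mono A B Q hR hQ T) x
  have hbdd : ∀ x, BddAbove (Set.range (q x)) := fun x =>
    ⟨b * ‖x‖^2, fun y ⟨T, hT⟩ => hT ▸ hb T x⟩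
  have hconv : ∀ x, Filter.Tendsto (q x) Filter.atTop (nhds (⨆ T, q x T)) := fun x =>
    tendsto_atTop_ciSup (hmono x) (hbdd x)
  have hentry : ∀ i j, Filter.Tendsto (fun T => riccati A B Q R T i j) Filter.atTop
      (nhds (((⨆ T, q (Pi.single i 1 + Pi.single j 1) T) - (⨆ T, q (Pi.single i 1) T)
        - (⨆ T, q (Pi.single j 1) T)) / 2)) := by
    intro i j
    have heq : ∀ T, riccati A B Q R T i j =
        (q (Pi.single i 1 + Pi.single j 1) T - q (Pi.single i 1) T
          - q (Pi.single j 1) T) / 2 := fun T =>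
      entry_of_quadratic _ (ric_psd A B Q hR hQ T).isHermitian i j
    rw [show (fun T => riccati A B Q R T i j) = fun T =>
        (q (Pi.single i 1 + Pi.single j 1) T - q (Pi.single i 1) T
          - q (Pi.single j 1) T) / 2 from funext heq]
    exact (((hconv _).sub (hconv _)).sub (hconv _)).div_const 2
  have hdiff : ∀ i j, Filter.Tendsto
      (fun T => |(riccati A B Q R (T+1) - riccati A B Q R T) i j|)
      Filter.atTop (nhds 0) := by
    intro i j
    have h1 : Filter.Tendsto (fun T => riccati A B Q R (T+1) i j) Filter.atTop
        (nhds _) := (hentry i j).comp (Filter.tendsto_add_atTop_nat 1)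
    have h2 := (h1.sub (hentry i j))
    rw [sub_self] at h2
    have h3 := h2.abs
    rw [abs_zero] at h3
    refine h3.congr fun T => ?_
    simp [Matrix.sub_apply]
  have := tendsto_finset_sum (Finset.univ : Finset (Fin n)) (fun i _ =>
    tendsto_finset_sum (Finset.univ : Finset (Fin n)) (fun j _ => hdiff i j))
  simpa using this

end RicAux

/-- Under stabilizability of `(A,B)`, there exist constants `α_T > 1` with `α_T → 1` such
that `P_{T+1} ⪯ α_{T+1} P_T` for all `T ≥ 1` (Appendix Lemma 1). -/
theorem riccati_horizon_comparison_constants {n m : ℕ}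
    (A : Matrix (Fin n) (Fin n) ℝ) (B : Matrix (Fin n) (Fin m) ℝ)
    (Q : Matrix (Fin n) (Fin n) ℝ) (R : Matrix (Fin m) (Fin m) ℝ)
    (hQ : Q.PosDef) (hR : R.PosDef)
    (hstab : ∃ K : Matrix (Fin m) (Fin n) ℝ,
      ∀ μ ∈ spectrum ℂ ((A - B * K).map (fun r : ℝ => (r : ℂ))), ‖μ‖ < 1) :
    ∃ α : ℕ → ℝ,
      (∀ T : ℕ, 2 ≤ T → 1 < α T) ∧
      Filter.Tendsto α Filter.atTop (nhds 1) ∧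
      (∀ T : ℕ, 1 ≤ T →
        loewnerLE (riccati A B Q R (T + 1)) (α (T + 1) • riccati A B Q R T)) := by
  classical
  obtain ⟨K0, hK0⟩ := hstab
  rcases Nat.eq_zero_or_pos n with h0 | hn
  · subst h0
    refine ⟨fun T => 1 + (T:ℝ)⁻¹, fun T hT => ?_, ?_, fun T hT => ?_⟩
    · have : (0:ℝ) < (T:ℝ)⁻¹ := by
        have : (0:ℝ) < (T:ℝ) := by exact_mod_cast Nat.lt_of_lt_of_le (by norm_num) hT
        positivity
      linarith
    · have := tendsto_inv_atTop_nhds_zero_nat (𝕜 := ℝ)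
      have h := (tendsto_const_nhds :
        Filter.Tendsto (fun _ : ℕ => (1:ℝ)) Filter.atTop (nhds 1)).add this
      simpa using h
    · refine ⟨?_, fun x => ?_⟩
      · funext i j; exact absurd i.2 (by omega)
      · simp [Subsingleton.elim x 0]
  · obtain ⟨c, hc, hlow⟩ := RicAux.posdef_lower hQ
    set δ : ℕ → ℝ := fun T => ∑ i, ∑ j,
      |(riccati A B Q R (T+1) - riccati A B Q R T) i j| with hδdef
    have hδ0 : ∀ T, 0 ≤ δ T := fun T =>
      Finset.sum_nonneg fun i _ => Finset.sum_nonneg fun j _ => abs_nonneg _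
    have hδten : Filter.Tendsto δ Filter.atTop (nhds 0) :=
      RicAux.delta_tendsto hn A B hR hQ.posSemidef K0 hK0
    refine ⟨fun T => 1 + δ (T-1) / c + (T:ℝ)⁻¹, fun T hT => ?_, ?_, fun T hT => ?_⟩
    · have h1 : (0:ℝ) < (T:ℝ)⁻¹ := by
        have : (0:ℝ) < (T:ℝ) := by exact_mod_cast Nat.lt_of_lt_of_le (by norm_num) hT
        positivity
      have h2 : 0 ≤ δ (T-1) / c := div_nonneg (hδ0 _) hc.le
      linarith
    · have h1 : Filter.Tendsto (fun T : ℕ => δ (T-1)) Filter.atTop (nhds 0) :=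
        hδten.comp (Filter.tendsto_sub_atTop_nat 1)
      have h2 : Filter.Tendsto (fun T : ℕ => δ (T-1) / c) Filter.atTop (nhds 0) := by
        simpa using h1.div_const c
      have h3 := ((tendsto_const_nhds :
        Filter.Tendsto (fun _ : ℕ => (1:ℝ)) Filter.atTop (nhds 1)).add h2).add
        tendsto_inv_atTop_nhds_zero_nat
      simpa using h3
    · -- main inequality
      set P := riccati A B Q R T with hP
      set P' := riccati A B Q R (T+1) with hP'
      have hPsd := RicAux.ric_psd A B Q hR hQ.posSemidef T
      have hPsd' := RicAux.ric_psd A B Q hR hQ.posSemidef (T+1)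
      have hα : (1 + δ ((T+1)-1) / c + ((T+1:ℕ):ℝ)⁻¹) =
          1 + δ T / c + ((T+1:ℕ):ℝ)⁻¹ := by rw [Nat.add_sub_cancel]
      rw [loewnerLE]
      refine Matrix.PosSemidef.of_dotProduct_mulVec_nonneg ?_ ?_
      · -- Hermitian
        have h1 : ((1 + δ ((T+1)-1) / c + ((T+1:ℕ):ℝ)⁻¹) • P - P')ᵀ =
            (1 + δ ((T+1)-1) / c + ((T+1:ℕ):ℝ)⁻¹) • P - P' := by
          rw [transpose_sub, transpose_smul, (show Pᵀ = P from hPsd.isHermitian),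
            (show P'ᵀ = P' from hPsd'.isHermitian)]
        exact h1
      · intro x
        rw [RicAux.star_triv, Matrix.sub_mulVec, dotProduct_sub,
          Matrix.smul_mulVec, dotProduct_smul]
        have hd : x ⬝ᵥ P' *ᵥ x - x ⬝ᵥ P *ᵥ x ≤ δ T * ‖x‖^2 := by
          have := RicAux.dot_le_norm (P' - P) x
          rwa [Matrix.sub_mulVec, dotProduct_sub] at this
        have hQle : c * ‖x‖^2 ≤ x ⬝ᵥ P *ᵥ x := by
          refine (hlow x).trans ?_
          exact RicAux.loewner_dot (RicAux.Q_le_ric A B Q hR hQ.posSemidef hT) x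
        have hPnn : 0 ≤ x ⬝ᵥ P *ᵥ x := by
          have := hPsd.dotProduct_mulVec_nonneg x
          rwa [RicAux.star_triv] at this
        have hinv : (0:ℝ) ≤ ((T+1:ℕ):ℝ)⁻¹ := by positivity
        have hδc : 0 ≤ δ T / c := div_nonneg (hδ0 T) hc.le
        have hkey : δ T * ‖x‖^2 ≤ (δ T / c) * (x ⬝ᵥ P *ᵥ x) := by
          have h1 := mul_le_mul_of_nonneg_left hQle hδc
          have h2 : (δ T / c) * (c * ‖x‖^2) = δ T * ‖x‖^2 := by
            field_simp
          linarith
        have hsmul : (1 + δ ((T+1)-1) / c + ((T+1:ℕ):ℝ)⁻¹) • (x ⬝ᵥ P *ᵥ x) =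
            (1 + δ T / c + ((T+1:ℕ):ℝ)⁻¹) * (x ⬝ᵥ P *ᵥ x) := by
          rw [hα]; rfl
        rw [hsmul]
        have hexp : (1 + δ T / c + ((T+1:ℕ):ℝ)⁻¹) * (x ⬝ᵥ P *ᵥ x) =
            (x ⬝ᵥ P *ᵥ x) + (δ T / c) * (x ⬝ᵥ P *ᵥ x)
              + ((T+1:ℕ):ℝ)⁻¹ * (x ⬝ᵥ P *ᵥ x) := by ring
        rw [hexp]
        have hinvP : 0 ≤ ((T+1:ℕ):ℝ)⁻¹ * (x ⬝ᵥ P *ᵥ x) := mul_nonneg hinv hPnn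
        linarith
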